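/- Let n ≥ 1, let γ ∈ ℝⁿ have all entries strictly positive, let q ∈ ℝⁿ have all entries nonnegative, and let η be a permutation of {1,…,n} such that x_l := q_{η(l)}/γ_{η(l)} satisfies x₁ ≥ x₂ ≥ … ≥ xₙ. Let ε > 0, c > 0, and let β ∈ ℝⁿ satisfy Σ_{r=1}^l β_r ≤ −c for all l ∈ {1,…,n−1} and Σ_{r=1}^n β_r = 0. Then −ε·x₁ + Σ_{l=1}^n β_l x_l ≤ −(ε/√(Σ_r γ_r))·‖O_∥‖₂ − (c/√(n·max_l γ_l))·‖O_⊥‖₂, where O_∥ = ((‖q‖₁/‖γ‖₁)·√γ_l)_{l=1}^n and O_⊥ = (q_l/√γ_l − (‖q‖₁/‖γ‖₁)·√γ_l)_{l=1}^n with ‖q‖₁ = Σ_l q_l, ‖γ‖₁ = Σ_l γ_l. -/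

import Mathlib

open Finset

theorem ssc_aux (n : ℕ) (h0 : 0 < n) (γ q : Fin n → ℝ)
    (hγ : ∀ l, 0 < γ l) (hq : ∀ l, 0 ≤ q l)
    (η : Equiv.Perm (Fin n))
    (hsort : ∀ i j : Fin n, i ≤ j → q (η j) / γ (η j) ≤ q (η i) / γ (η i))
    (ε c : ℝ) (hε : 0 < ε) (hc : 0 < c)
    (β : Fin n → ℝ)
    (hβ : ∀ l : Fin n, (l : ℕ) < n - 1 →
      ∑ r ∈ Finset.univ.filter (· ≤ l), β r ≤ -c)
    (hβsum : ∑ r, β r = 0)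
    (H : (Finset.univ : Finset (Fin n)).Nonempty) :
    -ε * (q (η ⟨0, h0⟩) / γ (η ⟨0, h0⟩)) + ∑ l, β l * (q (η l) / γ (η l))
      ≤ -(ε / Real.sqrt (∑ r, γ r)) *
          Real.sqrt (∑ l, ((∑ r, q r) / (∑ r, γ r) * Real.sqrt (γ l)) ^ 2)
        - (c / Real.sqrt (n * Finset.univ.sup' H γ)) *
          Real.sqrt (∑ l,
            (q l / Real.sqrt (γ l) - (∑ r, q r) / (∑ r, γ r) * Real.sqrt (γ l)) ^ 2) := by
  classical
  have hn1 : n - 1 < n := by omega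
  have hSpos : 0 < ∑ r, γ r := Finset.sum_pos (fun i _ => hγ i) H
  have hQ0 : 0 ≤ ∑ r, q r := Finset.sum_nonneg fun i _ => hq i
  set S := ∑ r, γ r with hSdef
  set Q := ∑ r, q r with hQdef
  set m := Q / S with hmdef
  have hm0 : 0 ≤ m := div_nonneg hQ0 hSpos.le
  set G := Finset.univ.sup' H γ with hGdef
  have hGpos : 0 < G := lt_of_lt_of_le (hγ ⟨0, h0⟩) (Finset.le_sup' γ (mem_univ _))
  have hnG : 0 < (n : ℝ) * G := mul_pos (by exact_mod_cast h0) hGpos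
  set T := q (η ⟨0, h0⟩) / γ (η ⟨0, h0⟩) with hTdef
  set Bt := q (η ⟨n - 1, hn1⟩) / γ (η ⟨n - 1, hn1⟩) with hBtdef
  clear_value S Q m G T Bt
  -- bounds on ratios
  have htop : ∀ l : Fin n, q l / γ l ≤ T := by
    intro l
    have := hsort ⟨0, h0⟩ (η.symm l) (by simp [Fin.le_def])
    rw [hTdef]
    rwa [Equiv.apply_symm_apply] at this
  have hbot : ∀ l : Fin n, Bt ≤ q l / γ l := by
    intro l
    have := hsort (η.symm l) ⟨n - 1, hn1⟩
      (by simp [Fin.le_def]; omega)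
    rw [hBtdef]
    rwa [Equiv.apply_symm_apply] at this
  have hTB : Bt ≤ T := le_trans (hbot (η ⟨0, h0⟩)) (le_of_eq hTdef.symm)
  -- m between Bt and T
  have hmT : m ≤ T := by
    rw [hmdef, div_le_iff₀ hSpos, hSdef, Finset.mul_sum, hQdef]
    exact Finset.sum_le_sum fun l _ => by
      have := (div_le_iff₀ (hγ l)).mp (htop l); linarith
  have hBm : Bt ≤ m := by
    rw [hmdef, le_div_iff₀ hSpos, hSdef, Finset.mul_sum, hQdef]
    exact Finset.sum_le_sum fun l _ => by
      have := (le_div_iff₀ (hγ l)).mp (hbot l); linarith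
  -- parallel norm
  have hpar : Real.sqrt (∑ l, (m * Real.sqrt (γ l)) ^ 2) = m * Real.sqrt S := by
    have h1 : ∀ l : Fin n, (m * Real.sqrt (γ l)) ^ 2 = m ^ 2 * γ l := fun l => by
      rw [mul_pow, Real.sq_sqrt (hγ l).le]
    rw [Finset.sum_congr rfl fun l _ => h1 l, ← Finset.mul_sum, ← hSdef,
      Real.sqrt_mul (sq_nonneg m), Real.sqrt_sq hm0]
  have hsqS : Real.sqrt S ≠ 0 := (Real.sqrt_pos.2 hSpos).ne'
  have heq1 : -(ε / Real.sqrt S) * (m * Real.sqrt S) = -(ε * m) := by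
    field_simp
  -- perpendicular norm bound
  have hperp : Real.sqrt (∑ l, (q l / Real.sqrt (γ l) - m * Real.sqrt (γ l)) ^ 2)
      ≤ Real.sqrt ((n : ℝ) * G) * (T - Bt) := by
    have hterm : ∀ l : Fin n,
        (q l / Real.sqrt (γ l) - m * Real.sqrt (γ l)) ^ 2 ≤ G * (T - Bt) ^ 2 := by
      intro l
      have hsq : Real.sqrt (γ l) ^ 2 = γ l := Real.sq_sqrt (hγ l).le
      have hs0 : Real.sqrt (γ l) ≠ 0 := (Real.sqrt_pos.2 (hγ l)).ne'
      have e : q l / Real.sqrt (γ l) - m * Real.sqrt (γ l)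
          = Real.sqrt (γ l) * (q l / γ l - m) := by
        rw [mul_sub, ← hsq]
        field_simp
        rw [Real.sq_sqrt (sq_nonneg (Real.sqrt (γ l)))]
      rw [e, mul_pow, hsq]
      have h2 : (q l / γ l - m) ^ 2 ≤ (T - Bt) ^ 2 := by
        apply sq_le_sq'
        · have := hbot l; linarith
        · have := htop l; linarith
      have hγG : γ l ≤ G := hGdef ▸ Finset.le_sup' γ (mem_univ l)
      nlinarith [sq_nonneg (q l / γ l - m), (hγ l).le]
    have hsum : ∑ l, (q l / Real.sqrt (γ l) - m * Real.sqrt (γ l)) ^ 2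
        ≤ (n : ℝ) * (G * (T - Bt) ^ 2) := by
      calc ∑ l, (q l / Real.sqrt (γ l) - m * Real.sqrt (γ l)) ^ 2
          ≤ ∑ _l : Fin n, G * (T - Bt) ^ 2 := Finset.sum_le_sum fun l _ => hterm l
        _ = (n : ℝ) * (G * (T - Bt) ^ 2) := by
            rw [Finset.sum_const, card_univ, Fintype.card_fin, nsmul_eq_mul]
    calc Real.sqrt (∑ l, (q l / Real.sqrt (γ l) - m * Real.sqrt (γ l)) ^ 2)
        ≤ Real.sqrt ((n : ℝ) * (G * (T - Bt) ^ 2)) := Real.sqrt_le_sqrt hsum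
      _ = Real.sqrt ((n : ℝ) * G) * (T - Bt) := by
          rw [← mul_assoc, Real.sqrt_mul hnG.le, Real.sqrt_sq (by linarith)]
  have hsqnG : (0:ℝ) < Real.sqrt ((n : ℝ) * G) := Real.sqrt_pos.2 hnG
  have hperp2 : (c / Real.sqrt ((n : ℝ) * G)) *
      Real.sqrt (∑ l, (q l / Real.sqrt (γ l) - m * Real.sqrt (γ l)) ^ 2)
      ≤ c * (T - Bt) := by
    have h1 := mul_le_mul_of_nonneg_left hperp
      (le_of_lt (div_pos hc hsqnG))
    calc (c / Real.sqrt ((n : ℝ) * G)) *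
        Real.sqrt (∑ l, (q l / Real.sqrt (γ l) - m * Real.sqrt (γ l)) ^ 2)
        ≤ (c / Real.sqrt ((n : ℝ) * G)) * (Real.sqrt ((n : ℝ) * G) * (T - Bt)) := h1
      _ = c * (T - Bt) := by field_simp
  -- Abel summation
  have habel : ∑ l, β l * (q (η l) / γ (η l)) ≤ -c * (T - Bt) := by
    set yN : ℕ → ℝ := fun k => if h : k < n then q (η ⟨k, h⟩) / γ (η ⟨k, h⟩) else 0 with hyN
    set bN : ℕ → ℝ := fun k => if h : k < n then β ⟨k, h⟩ else 0 with hbN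
    have hyc : ∀ l : Fin n, yN (l : ℕ) = q (η l) / γ (η l) := fun l => by
      simp [hyN, l.isLt]
    have hbc : ∀ l : Fin n, bN (l : ℕ) = β l := fun l => by
      simp [hbN, l.isLt]
    have hy0 : yN 0 = T := by
      rw [hTdef]; simp only [hyN]; rw [dif_pos h0]
    have hylast : yN (n - 1) = Bt := by
      rw [hBtdef]; simp only [hyN]; rw [dif_pos hn1]
    have hmono : ∀ i ∈ range (n - 1), yN (i + 1) ≤ yN i := by
      intro i hi
      rw [mem_range] at hi
      have h1 : i < n := by omega
      have h2 : i + 1 < n := by omega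
      have e1 : yN i = q (η ⟨i, h1⟩) / γ (η ⟨i, h1⟩) := by simp only [hyN]; rw [dif_pos h1]
      have e2 : yN (i + 1) = q (η ⟨i + 1, h2⟩) / γ (η ⟨i + 1, h2⟩) := by
        simp only [hyN]; rw [dif_pos h2]
      rw [e1, e2]
      exact hsort ⟨i, h1⟩ ⟨i + 1, h2⟩ (Fin.mk_le_mk.mpr (by omega))
    have h1 : ∑ l : Fin n, β l * (q (η l) / γ (η l)) = ∑ i ∈ range n, yN i • bN i := by
      rw [← Fin.sum_univ_eq_sum_range (fun i => yN i • bN i) n]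
      exact Finset.sum_congr rfl fun l _ => by
        rw [smul_eq_mul, hyc l, hbc l, mul_comm]
    have hb0 : ∑ i ∈ range n, bN i = 0 := by
      rw [← Fin.sum_univ_eq_sum_range bN n]
      rw [Finset.sum_congr rfl fun l _ => hbc l]
      exact hβsum
    have hB : ∀ i ∈ range (n - 1), ∑ j ∈ range (i + 1), bN j ≤ -c := by
      intro i hi
      rw [mem_range] at hi
      have h1i : i < n := by omega
      have key := hβ ⟨i, h1i⟩ (by simpa using hi)
      have e1 : ∑ r ∈ Finset.univ.filter (· ≤ (⟨i, h1i⟩ : Fin n)), β r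
          = ∑ r : Fin n, if (r : ℕ) ≤ i then bN (r : ℕ) else 0 := by
        rw [Finset.sum_filter]
        refine Finset.sum_congr rfl fun r _ => ?_
        rw [hbc r]
        simp [Fin.le_def]
      have e2 : ∑ r : Fin n, (if (r : ℕ) ≤ i then bN (r : ℕ) else 0)
          = ∑ j ∈ range n, if j ≤ i then bN j else 0 :=
        Fin.sum_univ_eq_sum_range (fun j => if j ≤ i then bN j else 0) n
      have e3 : ∑ j ∈ range n, (if j ≤ i then bN j else 0) = ∑ j ∈ range (i + 1), bN j := by
        rw [← Finset.sum_subset (Finset.range_subset_range.2 (show i + 1 ≤ n by omega))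
            (fun x _ hx => if_neg (by simp only [mem_range, not_lt] at hx; omega))]
        exact Finset.sum_congr rfl fun j hj => if_pos (by rw [mem_range] at hj; omega)
      calc ∑ j ∈ range (i + 1), bN j = ∑ r ∈ Finset.univ.filter (· ≤ (⟨i, h1i⟩ : Fin n)), β r := by
            rw [e1, e2, e3]
        _ ≤ -c := key
    rw [h1, Finset.sum_range_by_parts]
    rw [hb0, smul_zero, zero_sub]
    simp only [smul_eq_mul]
    have hterm : ∀ i ∈ range (n - 1),
        c * (yN i - yN (i + 1)) ≤ (yN (i + 1) - yN i) * (∑ j ∈ range (i + 1), bN j) := by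
      intro i hi
      have hd : 0 ≤ yN i - yN (i + 1) := by linarith [hmono i hi]
      have hBi := hB i hi
      nlinarith
    have hsum2 : c * (T - Bt)
        ≤ ∑ i ∈ range (n - 1), (yN (i + 1) - yN i) • (∑ j ∈ range (i + 1), bN j) := by
      calc c * (T - Bt) = ∑ i ∈ range (n - 1), c * (yN i - yN (i + 1)) := by
            rw [← Finset.mul_sum, Finset.sum_range_sub' yN (n - 1), hy0, hylast]
        _ ≤ _ := Finset.sum_le_sum fun i hi => by
            rw [smul_eq_mul]; exact hterm i hi
    simp only [smul_eq_mul] at hsum2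
    linarith [hsum2]
  -- combine
  have hfirst : -ε * T ≤ -(ε * m) := by nlinarith
  rw [hpar, heq1]
  linarith [hperp2, habel, hfirst]

theorem ssc_core_drift_inequality
    (n : ℕ) (hn : 1 ≤ n) (γ q : Fin n → ℝ)
    (hγ : ∀ l, 0 < γ l) (hq : ∀ l, 0 ≤ q l)
    (η : Equiv.Perm (Fin n))
    (hsort : ∀ i j : Fin n, i ≤ j → q (η j) / γ (η j) ≤ q (η i) / γ (η i))
    (ε c : ℝ) (hε : 0 < ε) (hc : 0 < c)
    (β : Fin n → ℝ)
    (hβ : ∀ l : Fin n, (l : ℕ) < n - 1 →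
      ∑ r ∈ Finset.univ.filter (· ≤ l), β r ≤ -c)
    (hβsum : ∑ r, β r = 0) :
    -ε * (q (η ⟨0, by omega⟩) / γ (η ⟨0, by omega⟩)) + ∑ l, β l * (q (η l) / γ (η l))
      ≤ -(ε / Real.sqrt (∑ r, γ r)) *
          Real.sqrt (∑ l, ((∑ r, q r) / (∑ r, γ r) * Real.sqrt (γ l)) ^ 2)
        - (c / Real.sqrt (n * Finset.univ.sup' ⟨⟨0, by omega⟩, Finset.mem_univ _⟩ γ)) *
          Real.sqrt (∑ l,
            (q l / Real.sqrt (γ l) - (∑ r, q r) / (∑ r, γ r) * Real.sqrt (γ l)) ^ 2) := by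
  exact ssc_aux n (by omega) γ q hγ hq η hsort ε c hε hc β hβ hβsum
    ⟨⟨0, by omega⟩, Finset.mem_univ _⟩
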